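/- Let σ > 0 and let Λ_σ be the centered Gaussian probability measure on ℝ^d with covariance σ^{-2} times the identity matrix. Then for all x, y ∈ ℝ^d, ∫ [sin(⟨ω, x⟩) sin(⟨ω, y⟩) + cos(⟨ω, x⟩) cos(⟨ω, y⟩)] dΛ_σ(ω) = exp(−‖x−y‖² / (2σ²)); i.e., the random Fourier feature inner product is an unbiased estimator of the Gaussian (RBF) kernel. -/

import Mathlib

open MeasureTheory Complex
open scoped ENNReal NNReal BigOperators Real

noncomputable section

lemma pi_integral_prod {ι : Type*} [Fintype ι] (μ : Measure ℝ) [SigmaFinite μ]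
    (f : ι → ℝ → ℂ) :
    ∫ x : ι → ℝ, ∏ i, f i (x i) ∂(Measure.pi fun _ : ι => μ) = ∏ i, ∫ t, f i t ∂μ := by
  letI : MeasureSpace ℝ := ⟨μ⟩
  haveI : SigmaFinite (volume : Measure ℝ) := ‹_›
  exact MeasureTheory.integral_fintype_prod_eq_prod f (μ := fun _ => μ)

lemma gauss_cexp (σ : ℝ) (hσ : 0 < σ) (t : ℝ) :
    ∫ ω : ℝ, Complex.exp (↑ω * ↑t * Complex.I)
        ∂(ProbabilityTheory.gaussianReal 0 (Real.toNNReal (1 / σ ^ 2)))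
      = (Real.exp (-t ^ 2 / (2 * σ ^ 2)) : ℂ) := by
  set v : ℝ≥0 := Real.toNNReal (1 / σ ^ 2) with hv
  have hvr : (v : ℝ) = 1 / σ ^ 2 := by
    rw [hv, Real.coe_toNNReal]; positivity
  have hvpos : 0 < (v : ℝ) := by rw [hvr]; positivity
  have hvne : v ≠ 0 := by
    intro h; rw [h] at hvpos; simp at hvpos
  rw [ProbabilityTheory.gaussianReal_of_var_ne_zero _ hvne]
  have hpdf : ProbabilityTheory.gaussianPDF 0 v
      = fun x => ((Real.toNNReal (ProbabilityTheory.gaussianPDFReal 0 v x) : ℝ≥0) : ℝ≥0∞) := by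
    funext x
    rw [ProbabilityTheory.gaussianPDF, ENNReal.ofReal]
  rw [hpdf, integral_withDensity_eq_integral_smul
    ((ProbabilityTheory.measurable_gaussianPDFReal 0 v).real_toNNReal)]
  set b : ℂ := -(1 / (2 * (v : ℝ))) with hb
  have hbre : b.re < 0 := by
    rw [hb]; simp; positivity
  have h1 : ∀ x : ℝ, (Real.toNNReal (ProbabilityTheory.gaussianPDFReal 0 v x))
        • Complex.exp (↑x * ↑t * I)
      = ((Real.sqrt (2 * π * v))⁻¹ : ℂ) * Complex.exp (b * x ^ 2 + (↑t * I) * x + 0) := by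
    intro x
    rw [NNReal.smul_def, Real.coe_toNNReal _ (ProbabilityTheory.gaussianPDFReal_nonneg _ _ _),
      ProbabilityTheory.gaussianPDFReal]
    rw [Complex.real_smul]
    push_cast
    rw [mul_assoc, ← Complex.exp_add]
    congr 2
    rw [hb]
    have hv0 : ((v : ℝ) : ℂ) ≠ 0 := by
      simp [ne_of_gt hvpos]
    field_simp
    ring
  simp_rw [h1]
  rw [integral_const_mul, integral_cexp_quadratic hbre (↑t * I) 0]
  have h2 : (↑π / -b) = ((2 * π * (v : ℝ) : ℝ) : ℂ) := by
    rw [hb, neg_neg]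
    have hv0 : ((v : ℝ) : ℂ) ≠ 0 := by simp [ne_of_gt hvpos]
    push_cast
    field_simp
  have h3 : (↑π / -b) ^ (1 / 2 : ℂ) = ((Real.sqrt (2 * π * (v : ℝ))) : ℂ) := by
    rw [h2]
    have hnn : (0 : ℝ) ≤ 2 * π * (v : ℝ) := by positivity
    rw [Real.sqrt_eq_rpow, Complex.ofReal_cpow hnn]
    norm_num
  rw [h3]
  have h4 : (0 : ℂ) - (↑t * I) ^ 2 / (4 * b) = ((-t ^ 2 / (2 * σ ^ 2) : ℝ) : ℂ) := by
    rw [hb, hvr]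
    have hσ0 : ((σ : ℝ) : ℂ) ≠ 0 := by simp [ne_of_gt hσ]
    push_cast
    field_simp
    ring_nf
    rw [Complex.I_sq]
    ring
  rw [h4]
  have hsne : (Real.sqrt (2 * π * (v : ℝ))) ≠ 0 := by positivity
  rw [← mul_assoc, ← Complex.ofReal_inv, ← Complex.ofReal_mul, inv_mul_cancel₀ hsne,
    Complex.ofReal_one, one_mul, Complex.ofReal_exp]

end

/-- Random Fourier features are unbiased estimators of the Gaussian (RBF) kernel: the expected
inner product of the sine/cosine features under the Gaussian spectral measure with covariance
`σ⁻² Id` equals `exp(−‖x − y‖² / (2σ²))`. -/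
theorem stmt15 (d : ℕ) (σ : ℝ) (hσ : 0 < σ) (x y : Fin d → ℝ) :
    ∫ ω : Fin d → ℝ,
        (Real.sin (∑ i, ω i * x i) * Real.sin (∑ i, ω i * y i)
          + Real.cos (∑ i, ω i * x i) * Real.cos (∑ i, ω i * y i))
        ∂(Measure.pi fun _ : Fin d =>
            ProbabilityTheory.gaussianReal 0 (Real.toNNReal (1 / σ ^ 2)))
      = Real.exp (-(∑ i, (x i - y i) ^ 2) / (2 * σ ^ 2)) := by
  have key : ∀ ω : Fin d → ℝ,
      Real.sin (∑ i, ω i * x i) * Real.sin (∑ i, ω i * y i)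
        + Real.cos (∑ i, ω i * x i) * Real.cos (∑ i, ω i * y i)
      = (∏ i, Complex.exp (↑(ω i) * ↑(x i - y i) * Complex.I)).re := by
    intro ω
    rw [← Complex.exp_sum]
    have hsum : ∑ i, (↑(ω i) * ↑(x i - y i) * Complex.I)
        = ((∑ i, ω i * (x i - y i) : ℝ) : ℂ) * Complex.I := by
      push_cast
      rw [Finset.sum_mul]
    rw [hsum, Complex.exp_ofReal_mul_I_re]
    have : ∑ i, ω i * (x i - y i) = (∑ i, ω i * x i) - ∑ i, ω i * y i := by
      rw [← Finset.sum_sub_distrib]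
      congr 1; funext i; ring
    rw [this, Real.cos_sub]
    ring
  simp_rw [key]
  have hcont : Continuous (fun ω : Fin d → ℝ =>
      ∏ i, Complex.exp (↑(ω i) * ↑(x i - y i) * Complex.I)) := by
    fun_prop
  have hint : Integrable (fun ω : Fin d → ℝ =>
      ∏ i, Complex.exp (↑(ω i) * ↑(x i - y i) * Complex.I))
      (Measure.pi fun _ : Fin d =>
        ProbabilityTheory.gaussianReal 0 (Real.toNNReal (1 / σ ^ 2))) := by
    apply Integrable.mono' (integrable_const 1) hcont.aestronglyMeasurable
    filter_upwards with ω
    have : ∀ i ∈ Finset.univ, ‖Complex.exp (↑(ω i) * ↑(x i - y i) * Complex.I)‖ = 1 := by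
      intro i _
      rw [← Complex.ofReal_mul]
      exact Complex.norm_exp_ofReal_mul_I _
    rw [norm_prod, Finset.prod_congr rfl this, Finset.prod_const_one]
  simp only [← RCLike.re_to_complex]
  rw [integral_re hint,
    pi_integral_prod _ (fun i (t : ℝ) => Complex.exp (↑t * ↑(x i - y i) * Complex.I))]
  simp_rw [gauss_cexp σ hσ]
  rw [← Complex.ofReal_prod, ← Real.exp_sum]
  rw [RCLike.re_to_complex, Complex.ofReal_re]
  congr 1
  simp [neg_div, Finset.sum_div]
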